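/- Fix m, l, g > 0 and ρ ∈ ℝ with ρ ≠ 0 and ρ ≠ m. Let Ω₁, Ω₂ : ℝ → ℝ and v, Γ : ℝ → ℝ³ solve the spherical-pendulum closed-loop system. Then the modified energy 𝓔(t) = (m l²/2)(Ω₁(t)² + Ω₂(t)²) + m (ρ/(ρ − m)) g l Γ₃(t) is constant in t. -/

import Mathlib

open Matrix

notation:74 a:74 " ×₃ " b:75 => crossProduct a b

/-- The spherical-pendulum closed-loop system: with `Ω = (Ω₁, Ω₂, 0)`,
`μ = (m l² Ω₁ − m l v₂, m l² Ω₂ + m l v₁, 0)` and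
`p = (ρ v₁ + m l Ω₂, ρ v₂ − m l Ω₁, ρ v₃)`, the first two components of
`μ' = μ × Ω + p × v − m g l (e₃ × Γ)` hold, together with `p' = p × Ω` and
`Γ' = Γ × Ω`. -/
def SphPendCL (m l g ρ : ℝ) (Ω₁ Ω₂ : ℝ → ℝ) (v Γ : ℝ → Fin 3 → ℝ) : Prop :=
  let Ω : ℝ → Fin 3 → ℝ := fun t => ![Ω₁ t, Ω₂ t, 0]
  let μ : ℝ → Fin 3 → ℝ := fun t =>
    ![m * l ^ 2 * Ω₁ t - m * l * v t 1, m * l ^ 2 * Ω₂ t + m * l * v t 0, 0]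
  let p : ℝ → Fin 3 → ℝ := fun t =>
    ![ρ * v t 0 + m * l * Ω₂ t, ρ * v t 1 - m * l * Ω₁ t, ρ * v t 2]
  Differentiable ℝ Ω₁ ∧ Differentiable ℝ Ω₂ ∧ Differentiable ℝ v ∧ Differentiable ℝ Γ ∧
  (∀ t, deriv μ t 0
      = (μ t ×₃ Ω t + p t ×₃ v t - (m * g * l) • (![(0 : ℝ), 0, 1] ×₃ Γ t)) 0) ∧
  (∀ t, deriv μ t 1
      = (μ t ×₃ Ω t + p t ×₃ v t - (m * g * l) • (![(0 : ℝ), 0, 1] ×₃ Γ t)) 1) ∧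
  (∀ t, deriv p t = p t ×₃ Ω t) ∧
  (∀ t, deriv Γ t = Γ t ×₃ Ω t)

/-- Along solutions of the spherical-pendulum closed-loop system, the modified energy
`𝓔 = (m l²/2)(Ω₁² + Ω₂²) + m (ρ/(ρ − m)) g l Γ₃` (the energy of a spherical pendulum
with modified gravitational constant `(ρ/(ρ − m)) g`) is constant in time. -/
theorem sphPend_modified_energy_constant (m l g ρ : ℝ) (hm : 0 < m) (hl : 0 < l)
    (hg : 0 < g) (hρ : ρ ≠ 0) (hρm : ρ ≠ m)
    (Ω₁ Ω₂ : ℝ → ℝ) (v Γ : ℝ → Fin 3 → ℝ) (hsol : SphPendCL m l g ρ Ω₁ Ω₂ v Γ)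
    (𝓔 : ℝ → ℝ)
    (h𝓔 : ∀ t, 𝓔 t = m * l ^ 2 / 2 * ((Ω₁ t) ^ 2 + (Ω₂ t) ^ 2)
        + m * (ρ / (ρ - m)) * g * l * Γ t 2) :
    ∀ t, 𝓔 t = 𝓔 0 := by
  simp only [SphPendCL] at hsol
  obtain ⟨hΩ₁, hΩ₂, hv, hΓ, hμ0, hμ1, hp, hΓ'⟩ := hsol
  have hm' : m ≠ 0 := hm.ne'
  have hl' : l ≠ 0 := hl.ne'
  have hρm' : ρ - m ≠ 0 := sub_ne_zero.mpr hρm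
  have hvc : ∀ i, Differentiable ℝ fun s => v s i := differentiable_pi.mp hv
  have hΓc : ∀ i, Differentiable ℝ fun s => Γ s i := differentiable_pi.mp hΓ
  have key : ∀ t, HasDerivAt 𝓔 0 t := by
    intro t
    have hd1 : HasDerivAt Ω₁ (deriv Ω₁ t) t := (hΩ₁ t).hasDerivAt
    have hd2 : HasDerivAt Ω₂ (deriv Ω₂ t) t := (hΩ₂ t).hasDerivAt
    have hv0 : HasDerivAt (fun s => v s 0) (deriv (fun s => v s 0) t) t := (hvc 0 t).hasDerivAt
    have hv1 : HasDerivAt (fun s => v s 1) (deriv (fun s => v s 1) t) t := (hvc 1 t).hasDerivAt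
    have hv2 : HasDerivAt (fun s => v s 2) (deriv (fun s => v s 2) t) t := (hvc 2 t).hasDerivAt
    -- derivative of μ
    have hμd : HasDerivAt
        (fun s => ![m * l ^ 2 * Ω₁ s - m * l * v s 1, m * l ^ 2 * Ω₂ s + m * l * v s 0, 0])
        ![m * l ^ 2 * deriv Ω₁ t - m * l * deriv (fun s => v s 1) t,
          m * l ^ 2 * deriv Ω₂ t + m * l * deriv (fun s => v s 0) t, 0] t := by
      rw [hasDerivAt_pi]
      intro i
      fin_cases i <;> simp only [Matrix.cons_val_zero, Matrix.cons_val_one, Matrix.head_cons,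
        Matrix.cons_val_two, Matrix.tail_cons]
      · exact (hd1.const_mul _).sub (hv1.const_mul _)
      · exact (hd2.const_mul _).add (hv0.const_mul _)
      · exact hasDerivAt_const _ _
    have hpd : HasDerivAt
        (fun s => ![ρ * v s 0 + m * l * Ω₂ s, ρ * v s 1 - m * l * Ω₁ s, ρ * v s 2])
        ![ρ * deriv (fun s => v s 0) t + m * l * deriv Ω₂ t,
          ρ * deriv (fun s => v s 1) t - m * l * deriv Ω₁ t,
          ρ * deriv (fun s => v s 2) t] t := by
      rw [hasDerivAt_pi]
      intro i
      fin_cases i <;> simp only [Matrix.cons_val_zero, Matrix.cons_val_one, Matrix.head_cons,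
        Matrix.cons_val_two, Matrix.tail_cons]
      · exact (hv0.const_mul _).add (hd2.const_mul _)
      · exact (hv1.const_mul _).sub (hd1.const_mul _)
      · exact hv2.const_mul _
    have hΓd : HasDerivAt Γ (fun i => deriv (fun s => Γ s i) t) t :=
      hasDerivAt_pi.mpr fun i => (hΓc i t).hasDerivAt
    -- scalar equations
    have eA := hμ0 t
    have eB := hμ1 t
    have eC := congrFun (hp t) 0
    have eD := congrFun (hp t) 1
    have eG := congrFun (hΓ' t) 2
    rw [hμd.deriv] at eA eB
    rw [hpd.deriv] at eC eD
    rw [hΓd.deriv] at eG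
    simp only [cross_apply, Pi.add_apply, Pi.sub_apply, Pi.smul_apply, smul_eq_mul,
      Matrix.cons_val_zero, Matrix.cons_val_one, Matrix.head_cons, Matrix.cons_val_two,
      Matrix.tail_cons] at eA eB eC eD eG
    -- derivative of the energy
    have hE : HasDerivAt 𝓔
        (m * l ^ 2 / 2 * ((2 : ℕ) * Ω₁ t ^ 1 * deriv Ω₁ t + (2 : ℕ) * Ω₂ t ^ 1 * deriv Ω₂ t)
          + m * (ρ / (ρ - m)) * g * l * deriv (fun s => Γ s 2) t) t := by
      have : 𝓔 = fun t => m * l ^ 2 / 2 * ((Ω₁ t) ^ 2 + (Ω₂ t) ^ 2)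
          + m * (ρ / (ρ - m)) * g * l * Γ t 2 := funext h𝓔
      rw [this]
      exact (((hd1.pow 2).add (hd2.pow 2)).const_mul _).add
        (((hΓc 2 t).hasDerivAt).const_mul _)
    convert hE using 1
    rw [eG]
    field_simp
    linear_combination (-2 * Ω₁ t * ρ) * eA - (2 * Ω₁ t * m * l) * eD - (2 * Ω₂ t * ρ) * eB + (2 * Ω₂ t * m * l) * eC
  intro t
  exact is_const_of_deriv_eq_zero (fun s => (key s).differentiableAt)
    (fun s => (key s).deriv) t 0
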